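/- The Jordanian twisting element satisfies the Drinfeld cocycle identity at the level of the Borel algebra represented by 2×2 matrices: with H = E₁₁ (acting so that [H,E]=E for E = E₁₂, E²=0), σ = log(1+ξE) = ξE, the element F = exp(H ⊗ σ) in U(B)⊗U(B) satisfies F₁₂ · (Δ⊗id)(F) = F₂₃ · (id⊗Δ)(F), where Δ is the primitive coproduct Δ(x)=x⊗1+1⊗x extended as an algebra map. -/

import Mathlib

set_option maxHeartbeats 1000000
set_option synthInstance.maxHeartbeats 400000

/- STATEMENT 14: The Jordanian twist satisfies the Drinfeld cocycle identity at the level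
of the Borel algebra represented by 2×2 matrices: H = E₁₁, E = E₁₂ (so E² = 0 and
σ = log(1+ξE) = ξE).  Then F = exp(H⊗σ) = 1 + H⊗σ, F₁₂ = F⊗1, F₂₃ = 1⊗F, and with Δ the
primitive coproduct extended as an algebra map one has
(Δ⊗id)(F) = exp(ΔH⊗σ)  with ΔH = H⊗1+1⊗H, and
(id⊗Δ)(F) = exp(H⊗Δσ)  with Δσ = log(1+ξΔE) = ξ(E⊗1+1⊗E) − ξ²(E⊗E).
Both exponential series truncate after the quadratic term (the cubes vanish), so they are
written below as 1 + X + (1/2)X².  The claim is F₁₂ · (Δ⊗id)(F) = F₂₃ · (id⊗Δ)(F). -/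

open TensorProduct Matrix

noncomputable section

variable (K : Type) [Field K] [CharZero K]

abbrev M2 := Matrix (Fin 2) (Fin 2) K

abbrev T3m := M2 K ⊗[K] (M2 K ⊗[K] M2 K)

def Hm : M2 K := single 0 0 1
def Em : M2 K := single 0 1 1

/-- `σ = log(1+ξE) = ξE` (since `E² = 0`). -/
def σm (ξ : K) : M2 K := ξ • Em K

/-- `F₁₂ = F ⊗ 1 = 1 + H⊗σ⊗1`. -/
def F12 (ξ : K) : T3m K := 1 + Hm K ⊗ₜ[K] (σm K ξ ⊗ₜ[K] (1 : M2 K))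

/-- `F₂₃ = 1 ⊗ F = 1 + 1⊗H⊗σ`. -/
def F23 (ξ : K) : T3m K := 1 + (1 : M2 K) ⊗ₜ[K] (Hm K ⊗ₜ[K] σm K ξ)

/-- `ΔH ⊗ σ = H⊗1⊗σ + 1⊗H⊗σ`. -/
def X1 (ξ : K) : T3m K :=
  Hm K ⊗ₜ[K] ((1 : M2 K) ⊗ₜ[K] σm K ξ) + (1 : M2 K) ⊗ₜ[K] (Hm K ⊗ₜ[K] σm K ξ)

/-- `H ⊗ Δσ` with `Δσ = log(1+ξΔE) = ξ(E⊗1) + ξ(1⊗E) − ξ²(E⊗E)`. -/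
def X2 (ξ : K) : T3m K :=
  Hm K ⊗ₜ[K] (ξ • (Em K ⊗ₜ[K] (1 : M2 K)) + ξ • ((1 : M2 K) ⊗ₜ[K] Em K)
    - ξ ^ 2 • (Em K ⊗ₜ[K] Em K))

/-- `(Δ⊗id)(F) = exp(ΔH⊗σ)`, truncated exactly. -/
def DF1 (ξ : K) : T3m K := 1 + X1 K ξ + (2 : K)⁻¹ • (X1 K ξ * X1 K ξ)

/-- `(id⊗Δ)(F) = exp(H⊗Δσ)`, truncated exactly. -/
def DF2 (ξ : K) : T3m K := 1 + X2 K ξ + (2 : K)⁻¹ • (X2 K ξ * X2 K ξ)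


instance : LeftDistribClass (T3m K) :=
  { left_distrib := fun a b c =>
      (Ring.toNonUnitalRing (α := T3m K)).left_distrib a b c }

instance : RightDistribClass (T3m K) :=
  { right_distrib := fun a b c =>
      (Ring.toNonUnitalRing (α := T3m K)).right_distrib a b c }

omit [CharZero K] in
lemma Tmul_smul (r : K) (a b : T3m K) : a * (r • b) = r • (a * b) :=
  Algebra.mul_smul_comm r a b
omit [CharZero K] in
lemma Tsmul_mul (r : K) (a b : T3m K) : (r • a) * b = r • (a * b) :=
  Algebra.smul_mul_assoc r a b
omit [CharZero K] in
lemma Tmul_neg (a b : T3m K) : a * -b = -(a * b) := by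
  rw [← neg_one_smul K b, Tmul_smul]; exact neg_one_smul K (a*b)
omit [CharZero K] in
lemma Tneg_mul (a b : T3m K) : -a * b = -(a * b) := by
  rw [← neg_one_smul K a, Tsmul_mul]; exact neg_one_smul K (a*b)
omit [CharZero K] in
lemma Tmul_zero (a : T3m K) : a * 0 = 0 := mul_zero a
omit [CharZero K] in
lemma Tzero_mul (a : T3m K) : 0 * a = 0 := zero_mul a
omit [CharZero K] in
lemma HHlem : Hm K * Hm K = Hm K := by simp [Hm, single_mul_single_same]
omit [CharZero K] in
lemma HElem : Hm K * Em K = Em K := by simp [Hm, Em, single_mul_single_same]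
omit [CharZero K] in
lemma EHlem : Em K * Hm K = 0 := by simp [Hm, Em, single_mul_single_of_ne]
omit [CharZero K] in
lemma EElem : Em K * Em K = 0 := by simp [Em, single_mul_single_of_ne]

theorem stmt14 (ξ : K) : F12 K ξ * DF1 K ξ = F23 K ξ * DF2 K ξ := by

  simp only [F12, F23, DF1, DF2, X1, X2, σm, sub_eq_add_neg,
    tmul_add, add_tmul, tmul_neg, neg_tmul, tmul_smul, smul_tmul,
    smul_add, smul_neg, smul_smul, neg_neg, mul_neg, neg_mul, neg_smul,
    mul_add, add_mul, Tmul_smul, Tsmul_mul, Tmul_neg, Tneg_mul, one_mul, mul_one,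
    Algebra.TensorProduct.tmul_mul_tmul, HHlem, HElem, EHlem, EElem,
    Algebra.TensorProduct.one_def,
    tmul_zero, zero_tmul, smul_zero, Tmul_zero, Tzero_mul, add_zero, zero_add, neg_zero]
  module

end
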